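/- Let K be a field, m ≥ 1, s ∈ ℤ^m, let P1 ∈ K[X]^{m×m} be nonsingular and s-reduced with s-row degree t = rdeg_s(P1), and let P2 ∈ K[X]^{m×m} be nonsingular and t-reduced. Then rdeg_s(P2·P1) = rdeg_t(P2) and lm_s(P2·P1) = lm_t(P2)·lm_s(P1). -/

import Mathlib

open Polynomial Matrix

/-- Degree of a polynomial as an element of `WithBot ℤ`, with `degZ 0 = ⊥`. -/
noncomputable def degZ {K : Type*} [Field K] (p : Polynomial K) : WithBot ℤ :=
  p.degree.map (fun n : ℕ => (n : ℤ))

/-- The `s`-degree of a row vector `p`: `max_j (deg p_j + s_j)`. -/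
noncomputable def sdeg {K : Type*} [Field K] {ι : Type*} [Fintype ι]
    (s : ι → ℤ) (p : ι → Polynomial K) : WithBot ℤ :=
  Finset.univ.sup fun j => degZ (p j) + (s j : WithBot ℤ)

/-- `j` is the `s`-pivot index of the row `p`: the largest index at which the
`s`-degree of `p` is attained. -/
def IsPivotIndex {K : Type*} [Field K] {ι : Type*} [Fintype ι] [LinearOrder ι]
    (s : ι → ℤ) (p : ι → Polynomial K) (j : ι) : Prop :=
  degZ (p j) + (s j : WithBot ℤ) = sdeg s p ∧
    ∀ k, j < k → degZ (p k) + (s k : WithBot ℤ) ≠ sdeg s p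

/-- `P` is in `s`-Popov form: it is nonsingular, the `s`-pivot entries are monic and
on the diagonal, and in each column the nonpivot entries have degree less than
the pivot entry. -/
def IsPopov {K : Type*} [Field K] {m : ℕ} (s : Fin m → ℤ)
    (P : Matrix (Fin m) (Fin m) (Polynomial K)) : Prop :=
  P.det ≠ 0 ∧ (∀ i, IsPivotIndex s (P i) i) ∧ (∀ i, (P i i).Monic) ∧
    ∀ i j, i ≠ j → (P i j).degree < (P j j).degree

/-- `p` is an interpolant for `(E, J)`: `∑ i, (row i of E) ⋅ (p i)(J) = 0`. -/
def IsInterpolant {K : Type*} [Field K] {ι n : Type*} [Fintype ι] [Fintype n] [DecidableEq n]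
    (E : Matrix ι n K) (J : Matrix n n K) (p : ι → Polynomial K) : Prop :=
  ∑ i, Matrix.vecMul (E i) (Polynomial.aeval J (p i)) = 0

/-- `P` is an interpolation basis for `(E, J)`: its rows form a basis of the
`K[X]`-module of interpolants for `(E, J)`. -/
def IsInterpolationBasis {K : Type*} [Field K] {ι n : Type*} [Fintype ι] [Fintype n]
    [DecidableEq n] (E : Matrix ι n K) (J : Matrix n n K)
    (P : Matrix ι ι (Polynomial K)) : Prop :=
  LinearIndependent (Polynomial K) (fun i => P i) ∧
    (Submodule.span (Polynomial K) (Set.range fun i => P i) : Set (ι → Polynomial K))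
      = {p | IsInterpolant E J p}

/-- The product `Q ⋅ E`: the matrix over `K` whose `i`-th row is `∑ j, (E j) ⋅ (Q i j)(J)`. -/
noncomputable def polMulMat {K : Type*} [Field K] {κ ι n : Type*} [Fintype κ] [Fintype ι]
    [Fintype n] [DecidableEq n]
    (Q : Matrix κ ι (Polynomial K)) (E : Matrix ι n K) (J : Matrix n n K) : Matrix κ n K :=
  fun i => ∑ j, Matrix.vecMul (E j) (Polynomial.aeval J (Q i j))

/-- The `s`-leading matrix of `R`: if row `i` has `s`-degree `d`, its `(i,j)` entry is
the coefficient of degree `d - s j` in `R i j` (and `0` if row `i` is zero). -/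
noncomputable def leadingMatrix {K : Type*} [Field K] {ι : Type*} [Fintype ι]
    (s : ι → ℤ) (R : Matrix ι ι (Polynomial K)) : Matrix ι ι K := fun i j =>
  WithBot.recBotCoe 0
    (fun d => if 0 ≤ d - s j then (R i j).coeff (d - s j).toNat else 0)
    (sdeg s (R i))


section Aux
variable {K : Type*} [Field K]

noncomputable def coeffZ (p : Polynomial K) (n : ℤ) : K :=
  if 0 ≤ n then p.coeff n.toNat else 0


lemma degZ_zero : degZ (0 : Polynomial K) = ⊥ := by simp [degZ]

lemma degZ_eq_natDegree {p : Polynomial K} (h : p ≠ 0) :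
    degZ p = ((p.natDegree : ℤ) : WithBot ℤ) := by
  rw [degZ, degree_eq_natDegree h, Nat.cast_withBot, WithBot.map_coe]

lemma degZ_mono {p q : Polynomial K} (h : p.degree ≤ q.degree) : degZ p ≤ degZ q :=
  (WithBot.monotone_map_iff.mpr (fun a b hab => by exact_mod_cast hab)) h

lemma degZ_add_le (p q : Polynomial K) : degZ (p + q) ≤ max (degZ p) (degZ q) := by
  rcases le_total p.degree q.degree with h | h
  · exact le_trans (degZ_mono (le_trans (degree_add_le p q) (by simp [h]))) (le_max_right _ _)
  · exact le_trans (degZ_mono (le_trans (degree_add_le p q) (by simp [h]))) (le_max_left _ _)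

lemma degZ_sum_le {ι : Type*} (S : Finset ι) (f : ι → Polynomial K) (a : WithBot ℤ)
    (h : ∀ k ∈ S, degZ (f k) ≤ a) : degZ (∑ k ∈ S, f k) ≤ a := by
  classical
  induction S using Finset.induction_on with
  | empty => simp [degZ_zero]
  | @insert x S hx ih =>
    rw [Finset.sum_insert hx]
    refine le_trans (degZ_add_le _ _) (max_le (h x (by simp)) (ih fun k hk => h k (by simp [hk])))

lemma degZ_mul (p q : Polynomial K) : degZ (p * q) = degZ p + degZ q := by
  by_cases hp : p = 0
  · simp [hp, degZ_zero]
  by_cases hq : q = 0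
  · simp [hq, degZ_zero]
  rw [degZ_eq_natDegree (mul_ne_zero hp hq), degZ_eq_natDegree hp, degZ_eq_natDegree hq,
    natDegree_mul hp hq]
  push_cast
  rfl

lemma coeffZ_zero (n : ℤ) : coeffZ (0 : Polynomial K) n = 0 := by simp [coeffZ]

lemma coeffZ_sum {ι : Type*} (S : Finset ι) (f : ι → Polynomial K) (n : ℤ) :
    coeffZ (∑ k ∈ S, f k) n = ∑ k ∈ S, coeffZ (f k) n := by
  unfold coeffZ
  split
  · simp [Polynomial.finset_sum_coeff]
  · simp

lemma degZ_le_coe {p : Polynomial K} {e : ℤ} (h : degZ p ≤ (e : WithBot ℤ)) (hp : p ≠ 0) :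
    (p.natDegree : ℤ) ≤ e := by
  rw [degZ_eq_natDegree hp] at h
  exact_mod_cast h

lemma coeffZ_mul {p q : Polynomial K} {e f : ℤ} (he : degZ p ≤ (e : WithBot ℤ))
    (hf : degZ q ≤ (f : WithBot ℤ)) :
    coeffZ (p * q) (e + f) = coeffZ p e * coeffZ q f := by
  by_cases hp : p = 0
  · simp [hp, coeffZ_zero]
  by_cases hq : q = 0
  · simp [hq, coeffZ_zero]
  have h1 : (p.natDegree : ℤ) ≤ e := degZ_le_coe he hp
  have h2 : (q.natDegree : ℤ) ≤ f := degZ_le_coe hf hq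
  have he0 : 0 ≤ e := le_trans (by positivity) h1
  have hf0 : 0 ≤ f := le_trans (by positivity) h2
  have hef : (e + f).toNat = e.toNat + f.toNat := by omega
  rw [coeffZ, coeffZ, coeffZ, if_pos (by omega), if_pos he0, if_pos hf0, hef]
  exact Polynomial.coeff_mul_add_eq_of_natDegree_le (by omega) (by omega)

lemma degZ_coeffZ_ne_zero {p : Polynomial K} {n : ℤ} (h : coeffZ p n ≠ 0) :
    (n : WithBot ℤ) ≤ degZ p := by
  rw [coeffZ] at h
  split at h
  · have hc : p.coeff n.toNat ≠ 0 := h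
    have hp : p ≠ 0 := fun h0 => hc (by simp [h0])
    have := Polynomial.le_natDegree_of_ne_zero hc
    rw [degZ_eq_natDegree hp]
    exact_mod_cast (by omega : n ≤ (p.natDegree : ℤ))
  · exact absurd rfl h

lemma add_coe_le_coe_iff (a : WithBot ℤ) (c b : ℤ) :
    a + (c : WithBot ℤ) ≤ (b : WithBot ℤ) ↔ a ≤ ((b - c : ℤ) : WithBot ℤ) := by
  cases a with
  | bot => simp
  | coe a =>
    rw [← WithBot.coe_add, WithBot.coe_le_coe, WithBot.coe_le_coe]
    omega

end Aux

/-- predictable degree / leading matrix of a product. If `P1` is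
nonsingular and `s`-reduced with `s`-row degree `t`, and `P2` is nonsingular and
`t`-reduced, then `rdeg_s(P2 P1) = rdeg_t(P2)` and
`lm_s(P2 P1) = lm_t(P2) ⋅ lm_s(P1)`. -/
theorem rdeg_and_leadingMatrix_mul {K : Type*} [Field K] {m : ℕ} (hm : 1 ≤ m)
    (s : Fin m → ℤ) (P1 P2 : Matrix (Fin m) (Fin m) (Polynomial K)) (t : Fin m → ℤ)
    (h1det : P1.det ≠ 0) (h1red : (leadingMatrix s P1).det ≠ 0)
    (ht : ∀ i, sdeg s (P1 i) = (t i : WithBot ℤ))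
    (h2det : P2.det ≠ 0) (h2red : (leadingMatrix t P2).det ≠ 0) :
    (∀ i, sdeg s ((P2 * P1) i) = sdeg t (P2 i)) ∧
      leadingMatrix s (P2 * P1) = leadingMatrix t P2 * leadingMatrix s P1 := by
    classical
  have hne : (Finset.univ : Finset (Fin m)).Nonempty := by
    haveI : NeZero m := ⟨by omega⟩
    exact Finset.univ_nonempty
  -- each row of P2 has integer t-degree
  have hD : ∀ i, ∃ D : ℤ, sdeg t (P2 i) = (D : WithBot ℤ) := by
    intro i
    obtain ⟨b, _, hb⟩ := Finset.exists_mem_eq_sup Finset.univ hne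
      (fun j => degZ (P2 i j) + (t j : WithBot ℤ))
    by_cases hz : P2 i b = 0
    · -- then sdeg = ⊥, so all entries zero, contradiction with det ≠ 0
      exfalso
      have hbot : sdeg t (P2 i) = ⊥ := by
        rw [sdeg, hb, hz, degZ_zero]; rfl
      have hrow : P2 i = 0 := by
        funext k
        have hk : degZ (P2 i k) + (t k : WithBot ℤ) ≤ ⊥ := by
          rw [← hbot]
          exact Finset.le_sup (f := fun j => degZ (P2 i j) + (t j : WithBot ℤ))
            (Finset.mem_univ k)
        rw [le_bot_iff] at hk
        by_contra hk0
        rw [degZ_eq_natDegree hk0, ← WithBot.coe_add] at hk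
        exact WithBot.coe_ne_bot hk
      exact h2det (Matrix.det_eq_zero_of_row_eq_zero i (fun j => by rw [hrow]; rfl))
    · refine ⟨(P2 i b).natDegree + t b, ?_⟩
      rw [sdeg, hb, degZ_eq_natDegree hz, ← WithBot.coe_add]
  choose D hDeq using hD
  -- degree bounds
  have hb2 : ∀ i k, degZ (P2 i k) ≤ ((D i - t k : ℤ) : WithBot ℤ) := by
    intro i k
    rw [← add_coe_le_coe_iff, ← hDeq i]
    exact Finset.le_sup (f := fun j => degZ (P2 i j) + (t j : WithBot ℤ)) (Finset.mem_univ k)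
  have hb1 : ∀ k j, degZ (P1 k j) ≤ ((t k - s j : ℤ) : WithBot ℤ) := by
    intro k j
    rw [← add_coe_le_coe_iff, ← ht k]
    exact Finset.le_sup (f := fun j => degZ (P1 k j) + (s j : WithBot ℤ)) (Finset.mem_univ j)
  -- entry degree bound for the product
  have hub : ∀ i j, degZ ((P2 * P1) i j) ≤ ((D i - s j : ℤ) : WithBot ℤ) := by
    intro i j
    rw [Matrix.mul_apply]
    refine degZ_sum_le _ _ _ (fun k _ => ?_)
    rw [degZ_mul]
    calc degZ (P2 i k) + degZ (P1 k j)
        ≤ ((D i - t k : ℤ) : WithBot ℤ) + ((t k - s j : ℤ) : WithBot ℤ) :=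
          add_le_add (hb2 i k) (hb1 k j)
      _ = ((D i - s j : ℤ) : WithBot ℤ) := by rw [← WithBot.coe_add]; congr 1; ring
  have hsup_le : ∀ i, sdeg s ((P2 * P1) i) ≤ ((D i : ℤ) : WithBot ℤ) := by
    intro i
    refine Finset.sup_le (fun j _ => ?_)
    rw [add_coe_le_coe_iff]
    exact hub i j
  -- coefficient formula
  have hco : ∀ i j, coeffZ ((P2 * P1) i j) (D i - s j) =
      ∑ k, coeffZ (P2 i k) (D i - t k) * coeffZ (P1 k j) (t k - s j) := by
    intro i j
    rw [Matrix.mul_apply, coeffZ_sum]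
    refine Finset.sum_congr rfl (fun k _ => ?_)
    have : D i - s j = (D i - t k) + (t k - s j) := by ring
    rw [this]
    exact coeffZ_mul (hb2 i k) (hb1 k j)
  -- leading matrix entries
  have hL2 : ∀ i k, leadingMatrix t P2 i k = coeffZ (P2 i k) (D i - t k) := by
    intro i k
    rw [leadingMatrix, hDeq i]
    rfl
  have hL1 : ∀ k j, leadingMatrix s P1 k j = coeffZ (P1 k j) (t k - s j) := by
    intro k j
    rw [leadingMatrix, ht k]
    rfl
  have hM : ∀ i j, (leadingMatrix t P2 * leadingMatrix s P1) i j =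
      coeffZ ((P2 * P1) i j) (D i - s j) := by
    intro i j
    rw [Matrix.mul_apply, hco]
    exact Finset.sum_congr rfl (fun k _ => by rw [hL2, hL1])
  -- the product leading matrix has nonzero rows
  have hMdet : (leadingMatrix t P2 * leadingMatrix s P1).det ≠ 0 := by
    rw [Matrix.det_mul]; exact mul_ne_zero h2red h1red
  have hrowM : ∀ i, ∃ j, (leadingMatrix t P2 * leadingMatrix s P1) i j ≠ 0 := by
    intro i
    by_contra h
    push_neg at h
    exact hMdet (Matrix.det_eq_zero_of_row_eq_zero i h)
  -- exact row degrees of the product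
  have hsd : ∀ i, sdeg s ((P2 * P1) i) = ((D i : ℤ) : WithBot ℤ) := by
    intro i
    refine le_antisymm (hsup_le i) ?_
    obtain ⟨j, hj⟩ := hrowM i
    rw [hM i j] at hj
    have h1 : ((D i - s j : ℤ) : WithBot ℤ) ≤ degZ ((P2 * P1) i j) := degZ_coeffZ_ne_zero hj
    have h2 : ((D i : ℤ) : WithBot ℤ) ≤ degZ ((P2 * P1) i j) + ((s j : ℤ) : WithBot ℤ) := by
      calc ((D i : ℤ) : WithBot ℤ) = ((D i - s j : ℤ) : WithBot ℤ) + ((s j : ℤ) : WithBot ℤ) := by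
            rw [← WithBot.coe_add]; congr 1; ring
        _ ≤ degZ ((P2 * P1) i j) + ((s j : ℤ) : WithBot ℤ) := add_le_add_left h1 _
    exact le_trans h2 (Finset.le_sup (f := fun j => degZ ((P2 * P1) i j) + (s j : WithBot ℤ))
      (Finset.mem_univ j))
  constructor
  · intro i
    rw [hsd i, hDeq i]
  · funext i j
    rw [hM i j, leadingMatrix, hsd i]
    rfl
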